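/- arXiv:2002.05027 — 6 statements merged into one kernel-verified Lean document; each statement's English description precedes it below -/
import Mathlib

section
/- For every k ≥ 1 and every d = (d1, …, dk) ∈ ℤ^k, the monomial shuffle element Sh_k(d) is a Laurent polynomial (i.e., despite each factor ω having denominator z_i − z_j, the full symmetrized sum lies in the subring R[z1^{±1}, …, zk^{±1}] of F_k), and it is symmetric: for every permutation τ of {1, …, k}, Sh_k(d) is invariant under the ℂ(q1,q2)-algebra automorphism of F_k permuting the variables z_i ↦ z_{τ(i)}. -/
set_option maxHeartbeats 1000000
set_option synthInstance.maxHeartbeats 400000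

open MvPolynomial Finset

noncomputable section

/-- `Fk k` is the field `F_k = ℂ(q1, q2, z1, …, zk)`, realized as the fraction field of the
polynomial ring `ℂ[q1, q2, z1, …, zk]`. -/
abbrev Fk (k : ℕ) : Type := FractionRing (MvPolynomial (Fin 2 ⊕ Fin k) ℂ)

/-- The indeterminate `q1` in `F_k`. -/
def q1F (k : ℕ) : Fk k := algebraMap (MvPolynomial (Fin 2 ⊕ Fin k) ℂ) (Fk k) (X (Sum.inl 0))

/-- The indeterminate `q2` in `F_k`. -/
def q2F (k : ℕ) : Fk k := algebraMap (MvPolynomial (Fin 2 ⊕ Fin k) ℂ) (Fk k) (X (Sum.inl 1))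

/-- The indeterminates `z1, …, zk` in `F_k` (zero-indexed: `zF k i` is `z_{i+1}`). -/
def zF (k : ℕ) (i : Fin k) : Fk k := algebraMap (MvPolynomial (Fin 2 ⊕ Fin k) ℂ) (Fk k) (X (Sum.inr i))

/-- `ω(x, y) = (x − q·y)(y − q1·x)(y − q2·x)/(x − y)`, where `q = q1·q2`. -/
def omegaF {K : Type*} [Field K] (q1 q2 x y : K) : K :=
  (x - q1 * q2 * y) * (y - q1 * x) * (y - q2 * x) / (x - y)

/-- The monomial shuffle element
`Sh_k(d) = Σ_{σ ∈ S_k} ∏_{i=1}^k z_{σ(i)}^{d_i} · ∏_{1 ≤ i < j ≤ k} ω(z_{σ(i)}, z_{σ(j)})`,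
as a rational expression in the values `z : Fin k → K`. -/
def Sh {K : Type*} [Field K] (q1 q2 : K) {k : ℕ} (z : Fin k → K) (d : Fin k → ℤ) : K :=
  ∑ σ : Equiv.Perm (Fin k), (∏ i, z (σ i) ^ d i) *
    ∏ p ∈ Finset.univ.filter (fun p : Fin k × Fin k => p.1 < p.2),
      omegaF q1 q2 (z (σ p.1)) (z (σ p.2))

/-- The Laurent polynomial subring `R[z1^{±1}, …, zk^{±1}]` of `K`, where
`R = ℂ[q1^{±1}, q2^{±1}]`: the subring generated by the complex constants,
`q1^{±1}`, `q2^{±1}` and the `z_i^{±1}`. -/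
def laurentSubring {K : Type*} [Field K] [Algebra ℂ K] (q1 q2 : K) {k : ℕ} (z : Fin k → K) :
    Subring K :=
  Subring.closure ((Set.range fun c : ℂ => algebraMap ℂ K c) ∪ {q1, q1⁻¹, q2, q2⁻¹} ∪
    Set.range z ∪ Set.range fun i => (z i)⁻¹)

/-- The `ℂ(q1,q2)`-algebra automorphism of `F_k` fixing `q1, q2` and sending `z_i ↦ z_{τ(i)}`. -/
def permAut (k : ℕ) (τ : Equiv.Perm (Fin k)) : Fk k ≃+* Fk k :=
  IsFractionRing.ringEquivOfRingEquiv
    (MvPolynomial.renameEquiv ℂ (Equiv.sumCongr (Equiv.refl (Fin 2)) τ)).toRingEquiv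

/-! ### Auxiliary material -/

/-- The polynomial ring `ℂ[q1, q2, z1, …, zk]`. -/
abbrev Ak (k : ℕ) := MvPolynomial (Fin 2 ⊕ Fin k) ℂ

/-- The variable `z_i` as a polynomial. -/
def Xz {k : ℕ} (i : Fin k) : Ak k := X (Sum.inr i)

/-- The finset of ordered pairs `i < j`. -/
def pairsF (k : ℕ) : Finset (Fin k × Fin k) :=
  Finset.univ.filter (fun p : Fin k × Fin k => p.1 < p.2)

lemma prod_pairsF {R : Type*} [CommMonoid R] (k : ℕ) (g : Fin k × Fin k → R) :
    ∏ p ∈ pairsF k, g p = ∏ i : Fin k, ∏ j ∈ Ioi i, g (i, j) := by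
  rw [Finset.prod_sigma']
  apply Finset.prod_nbij' (fun p => ⟨p.1, p.2⟩) (fun x => (x.1, x.2))
  · intro p hp; simp only [pairsF, mem_filter, mem_univ, true_and] at hp
    simpa [Finset.mem_sigma, Finset.mem_Ioi] using hp
  · intro a ha; simp only [pairsF, mem_filter, mem_univ, true_and]
    simpa [Finset.mem_sigma, Finset.mem_Ioi] using ha
  · intro a _; rfl
  · intro p _; rfl
  · intro a _; rfl

lemma vand_sign {R : Type*} [CommRing R] (k : ℕ) (f : Fin k → R) (σ : Equiv.Perm (Fin k)) :
    ∏ p ∈ pairsF k, (f (σ p.1) - f (σ p.2))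
      = ((Equiv.Perm.sign σ : ℤ) : R) * ∏ p ∈ pairsF k, (f p.1 - f p.2) := by
  have W : ∀ h : Fin k → R, ∏ p ∈ pairsF k, (h p.2 - h p.1) = (Matrix.vandermonde h).det := by
    intro h
    rw [Matrix.det_vandermonde, prod_pairsF]
  have neg : ∀ h : Fin k → R, ∏ p ∈ pairsF k, (h p.1 - h p.2)
      = (-1 : R) ^ (pairsF k).card * ∏ p ∈ pairsF k, (h p.2 - h p.1) := by
    intro h
    rw [← Finset.prod_const, ← Finset.prod_mul_distrib]
    exact Finset.prod_congr rfl (fun p _ => by ring)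
  have hsub : Matrix.vandermonde (f ∘ σ) = (Matrix.vandermonde f).submatrix σ id := by
    ext i j; simp [Matrix.vandermonde, Matrix.submatrix]
  have hperm : (Matrix.vandermonde (f ∘ σ)).det
      = ((Equiv.Perm.sign σ : ℤ) : R) * (Matrix.vandermonde f).det := by
    rw [hsub, Matrix.det_permute]
  calc ∏ p ∈ pairsF k, (f (σ p.1) - f (σ p.2))
      = ∏ p ∈ pairsF k, ((f ∘ σ) p.1 - (f ∘ σ) p.2) := rfl
    _ = (-1 : R) ^ (pairsF k).card * (Matrix.vandermonde (f ∘ σ)).det := by rw [neg, W]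
    _ = ((Equiv.Perm.sign σ : ℤ) : R)
          * ((-1 : R) ^ (pairsF k).card * (Matrix.vandermonde f).det) := by
        rw [hperm]; ring
    _ = _ := by rw [← W, ← neg]

lemma my_prod_primes_dvd {α : Type*} [CommMonoidWithZero α] [IsCancelMulZero α] {ι : Type*}
    (s : Finset ι) (g : ι → α) (n : α)
    (hp : ∀ i ∈ s, Prime (g i))
    (hna : ∀ i ∈ s, ∀ j ∈ s, i ≠ j → ¬ Associated (g i) (g j))
    (hd : ∀ i ∈ s, g i ∣ n) : (∏ i ∈ s, g i) ∣ n := by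
  induction s using Finset.cons_induction_on generalizing n with
  | empty => simpa using one_dvd n
  | @cons a s ha ih =>
    obtain ⟨t, rfl⟩ := hd a (Finset.mem_cons_self a s)
    rw [Finset.prod_cons]
    refine mul_dvd_mul_left (g a) (ih t (fun i hi => hp i (Finset.mem_cons_of_mem hi))
      (fun i hi j hj hij => hna i (Finset.mem_cons_of_mem hi) j (Finset.mem_cons_of_mem hj) hij)
      (fun i hi => ?_))
    have hpi := hp i (Finset.mem_cons_of_mem hi)
    rcases hpi.dvd_or_dvd (hd i (Finset.mem_cons_of_mem hi)) with h | h
    · exact absurd (hpi.associated_of_dvd (hp a (Finset.mem_cons_self a s)) h)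
        (hna i (Finset.mem_cons_of_mem hi) a (Finset.mem_cons_self a s)
          (by rintro rfl; exact ha hi))
    · exact h

/-- substitution `z_a ↦ z_b`, all other variables fixed -/
def phiAB {k : ℕ} (a b : Fin k) : Ak k →ₐ[ℂ] Ak k :=
  aeval (fun v => if v = Sum.inr a then X (Sum.inr b) else X v)

lemma phiAB_X {k : ℕ} (a b : Fin k) (v : Fin 2 ⊕ Fin k) :
    phiAB a b (X v) = if v = Sum.inr a then X (Sum.inr b) else X v := by
  simp [phiAB]

lemma sub_phi_mem {k : ℕ} (a b : Fin k) (P : Ak k) :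
    P - phiAB a b P ∈ Ideal.span {Xz a - Xz b} := by
  set I := Ideal.span {Xz a - Xz b} with hI
  induction P using MvPolynomial.induction_on with
  | C c => simpa [phiAB] using zero_mem I
  | add p q hp hq =>
    have : p + q - phiAB a b (p + q) = (p - phiAB a b p) + (q - phiAB a b q) := by
      rw [map_add]; ring
    rw [this]; exact add_mem hp hq
  | mul_X p v hp =>
    rw [map_mul, phiAB_X]
    split_ifs with h
    · have : p * X v - phiAB a b p * X (Sum.inr b)
          = (p - phiAB a b p) * X v + phiAB a b p * (Xz a - Xz b) := by
        subst h; rw [Xz, Xz]; ring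
      rw [this]
      exact add_mem (I.mul_mem_right _ hp) (I.mul_mem_left _ (Ideal.subset_span rfl))
    · have : p * X v - phiAB a b p * X v = (p - phiAB a b p) * X v := by ring
      rw [this]; exact I.mul_mem_right _ hp

lemma ker_phiAB {k : ℕ} {a b : Fin k} (hab : a ≠ b) :
    RingHom.ker (phiAB a b : Ak k →+* Ak k) = Ideal.span {Xz a - Xz b} := by
  apply le_antisymm
  · intro P hP
    have h0 : phiAB a b P = 0 := hP
    have := sub_phi_mem a b P
    rwa [h0, sub_zero] at this
  · rw [Ideal.span_le]
    rintro x hx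
    rw [Set.mem_singleton_iff] at hx
    subst hx
    show phiAB a b (Xz a - Xz b) = 0
    rw [map_sub, Xz, Xz, phiAB_X, phiAB_X, if_pos rfl,
      if_neg (fun h => hab (Sum.inr_injective h).symm)]
    ring

lemma prime_Xz_sub {k : ℕ} {a b : Fin k} (hab : a ≠ b) : Prime (Xz a - Xz b) := by
  have hne : Xz a - Xz b ≠ 0 := by
    rw [sub_ne_zero]
    exact fun h => hab (Sum.inr_injective (MvPolynomial.X_injective h))
  rw [← Ideal.span_singleton_prime hne, ← ker_phiAB hab]
  exact RingHom.ker_isPrime _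

lemma dvd_of_neg_rename {k : ℕ} {a b : Fin k} (hab : a ≠ b) {N : Ak k}
    (hN : rename (⇑(Equiv.sumCongr (Equiv.refl (Fin 2)) (Equiv.swap a b))) N = - N) :
    (Xz a - Xz b) ∣ N := by
  have hcomp : (phiAB a b).comp
      (rename (⇑(Equiv.sumCongr (Equiv.refl (Fin 2)) (Equiv.swap a b)))) = phiAB a b := by
    apply MvPolynomial.algHom_ext
    intro v
    simp only [AlgHom.comp_apply, rename_X, phiAB_X, Equiv.sumCongr_apply]
    rcases v with j | i
    · rfl
    · simp only [Sum.map_inr]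
      rcases eq_or_ne i a with rfl | hia
      · simp [hab.symm]
      · rcases eq_or_ne i b with rfl | hib
        · simp
        · simp [Equiv.swap_apply_of_ne_of_ne hia hib]
  have h1 := DFunLike.congr_fun hcomp N
  rw [AlgHom.comp_apply, hN, map_neg] at h1
  have h2 : (2 : Ak k) * phiAB a b N = 0 := by linear_combination - h1
  have h0 : phiAB a b N = 0 := by
    rcases mul_eq_zero.mp h2 with h | h
    · exact absurd h two_ne_zero
    · exact h
  have : N ∈ RingHom.ker (phiAB a b : Ak k →+* Ak k) := h0
  rw [ker_phiAB hab, Ideal.mem_span_singleton] at this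
  exact this

lemma not_assoc_Xz_sub {k : ℕ} {p q : Fin k × Fin k} (hp : p.1 < p.2) (hq : q.1 < q.2)
    (hpq : p ≠ q) : ¬ Associated (Xz p.1 - Xz p.2) (Xz q.1 - Xz q.2 : Ak k) := by
  intro h
  have hd : (Xz p.1 - Xz p.2) ∣ (Xz q.1 - Xz q.2 : Ak k) := h.dvd
  have hker : (Xz q.1 - Xz q.2 : Ak k) ∈ RingHom.ker (phiAB p.1 p.2 : Ak k →+* Ak k) := by
    rw [ker_phiAB hp.ne, Ideal.mem_span_singleton]; exact hd
  have h0 : phiAB p.1 p.2 (Xz q.1 - Xz q.2) = 0 := hker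
  rw [map_sub, Xz, Xz, phiAB_X, phiAB_X] at h0
  have hX : ∀ u v : Fin k, u ≠ v → X (Sum.inr u) - X (Sum.inr v) ≠ (0 : Ak k) := by
    intro u v huv h'
    rw [sub_eq_zero] at h'
    exact huv (Sum.inr_injective (MvPolynomial.X_injective h'))
  simp only [Sum.inr.injEq] at h0
  split_ifs at h0 with h1 h2 h2
  · exact absurd (h1.trans h2.symm) hq.ne
  · exact hX p.2 q.2 (fun h' => hpq (Prod.ext_iff.mpr ⟨h1.symm, h'⟩)) h0
  · exact hX q.1 p.2 (lt_trans (hq.trans_eq h2) hp).ne h0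
  · exact hX q.1 q.2 hq.ne h0

/-- The numerator polynomial for the `omega` factor. -/
def numP {k : ℕ} (a b : Fin k) : Ak k :=
  (Xz a - X (Sum.inl 0) * X (Sum.inl 1) * Xz b) * (Xz b - X (Sum.inl 0) * Xz a) *
    (Xz b - X (Sum.inl 1) * Xz a)

/-- The polynomial numerator of `Sh · Vandermonde · (z1 ⋯ zk)^m`. -/
def Npoly (k : ℕ) (e : Fin k → ℕ) : Ak k :=
  ∑ σ : Equiv.Perm (Fin k), (Equiv.Perm.sign σ : ℤ) •
    ((∏ i, Xz (σ i) ^ e i) * ∏ p ∈ pairsF k, numP (σ p.1) (σ p.2))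

lemma rename_Npoly {k : ℕ} (e : Fin k → ℕ) {a b : Fin k} (hab : a ≠ b) :
    rename (⇑(Equiv.sumCongr (Equiv.refl (Fin 2)) (Equiv.swap a b))) (Npoly k e)
      = - Npoly k e := by
  rw [Npoly, map_sum, ← Finset.sum_neg_distrib]
  apply Fintype.sum_equiv (Equiv.mulLeft (Equiv.swap a b))
  intro σ
  rw [map_zsmul]
  have hsign : ((Equiv.Perm.sign (Equiv.swap a b * σ) : ℤ)) = -(Equiv.Perm.sign σ : ℤ) := by
    rw [Equiv.Perm.sign_mul, Equiv.Perm.sign_swap hab]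
    simp
  rw [Equiv.coe_mulLeft, hsign, neg_zsmul, neg_neg]
  congr 1
  simp only [numP, Xz, map_prod, map_pow, map_mul, map_sub, rename_X, Equiv.sumCongr_apply,
    Sum.map_inr, Sum.map_inl, Equiv.refl_apply, Equiv.Perm.mul_apply]

/-- The Vandermonde polynomial. -/
def Dpoly (k : ℕ) : Ak k := ∏ p ∈ pairsF k, (Xz p.1 - Xz p.2)

lemma Dpoly_dvd_Npoly (k : ℕ) (e : Fin k → ℕ) : Dpoly k ∣ Npoly k e := by
  apply my_prod_primes_dvd
  · intro p hp
    rw [pairsF, mem_filter] at hp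
    exact prime_Xz_sub hp.2.ne
  · intro p hp q hq hpq
    rw [pairsF, mem_filter] at hp hq
    exact not_assoc_Xz_sub hp.2 hq.2 hpq
  · intro p hp
    rw [pairsF, mem_filter] at hp
    exact dvd_of_neg_rename hp.2.ne (rename_Npoly e hp.2.ne)

lemma Sh_comp {K : Type*} [Field K] (q1 q2 : K) {k : ℕ} (z : Fin k → K) (d : Fin k → ℤ)
    (τ : Equiv.Perm (Fin k)) : Sh q1 q2 (fun i => z (τ i)) d = Sh q1 q2 z d := by
  rw [Sh, Sh]
  apply Fintype.sum_equiv (Equiv.mulLeft τ)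
  intro σ
  simp [Equiv.Perm.mul_apply]

lemma map_Sh {K L : Type*} [Field K] [Field L] (g : K →+* L) (q1 q2 : K) {k : ℕ}
    (z : Fin k → K) (d : Fin k → ℤ) :
    g (Sh q1 q2 z d) = Sh (g q1) (g q2) (fun i => g (z i)) d := by
  rw [Sh, Sh, map_sum]
  apply Finset.sum_congr rfl
  intro σ _
  rw [map_mul, map_prod, map_prod]
  congr 1
  · exact Finset.prod_congr rfl fun i _ => map_zpow₀ g _ _
  · exact Finset.prod_congr rfl fun p _ => by simp [omegaF, map_div₀]

lemma zF_ne_zero (k : ℕ) (i : Fin k) : zF k i ≠ 0 := by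
  rw [zF, map_ne_zero_iff (algebraMap (Ak k) (Fk k)) (IsFractionRing.injective (Ak k) (Fk k))]
  exact MvPolynomial.X_ne_zero (R := ℂ) (σ := Fin 2 ⊕ Fin k) (s := Sum.inr i)

lemma zF_sub_ne_zero (k : ℕ) {i j : Fin k} (h : i ≠ j) : zF k i - zF k j ≠ 0 := by
  rw [zF, zF, ← map_sub (algebraMap (Ak k) (Fk k)),
    map_ne_zero_iff (algebraMap (Ak k) (Fk k)) (IsFractionRing.injective (Ak k) (Fk k)),
    sub_ne_zero]
  exact fun h' => h (Sum.inr_injective (MvPolynomial.X_injective h'))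

/-- The key identity: `Sh · (z1⋯zk)^m · Δ = N`. -/
lemma key_identity (k : ℕ) (d : Fin k → ℤ) (m : ℕ) (hm : ∀ i, 0 ≤ d i + m) :
    Sh (q1F k) (q2F k) (zF k) d * (∏ i, zF k i ^ m) * algebraMap (Ak k) (Fk k) (Dpoly k)
      = algebraMap (Ak k) (Fk k) (Npoly k (fun i => (d i + m).toNat)) := by
  have hVF : algebraMap (Ak k) (Fk k) (Dpoly k)
      = ∏ p ∈ pairsF k, (zF k p.1 - zF k p.2) := by
    rw [Dpoly, map_prod]
    exact Finset.prod_congr rfl fun p _ => by rw [map_sub]; rfl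
  rw [hVF, Sh, Npoly, map_sum]
  simp only [show (Finset.univ.filter fun p : Fin k × Fin k => p.1 < p.2) = pairsF k from rfl]
  rw [Finset.sum_mul, Finset.sum_mul]
  set V : Fk k := ∏ p ∈ pairsF k, (zF k p.1 - zF k p.2) with hV
  have hVne : V ≠ 0 := by
    rw [hV]
    apply Finset.prod_ne_zero_iff.mpr
    intro p hp
    rw [pairsF, mem_filter] at hp
    exact zF_sub_ne_zero k hp.2.ne
  apply Finset.sum_congr rfl
  intro σ _
  rw [map_zsmul, zsmul_eq_mul, map_mul, map_prod, map_prod]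
  set s : Fk k := ((Equiv.Perm.sign σ : ℤ) : Fk k) with hs
  have hs2 : s * s = 1 := by
    rcases Int.units_eq_one_or (Equiv.Perm.sign σ) with h | h <;> rw [hs, h] <;> norm_num
  have hsinv : s⁻¹ = s := inv_eq_of_mul_eq_one_right hs2
  have hnum : ∀ p : Fin k × Fin k, algebraMap (Ak k) (Fk k) (numP (σ p.1) (σ p.2))
      = (zF k (σ p.1) - q1F k * q2F k * zF k (σ p.2))
        * (zF k (σ p.2) - q1F k * zF k (σ p.1))
        * (zF k (σ p.2) - q2F k * zF k (σ p.1)) := by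
    intro p
    rw [numP]
    simp only [map_mul, map_sub]
    rfl
  have hXze : ∀ i : Fin k, algebraMap (Ak k) (Fk k) (Xz (σ i) ^ (d i + (m:ℤ)).toNat)
      = zF k (σ i) ^ (d i + (m:ℤ)).toNat := fun i => by rw [map_pow]; rfl
  set NumF : Fk k := ∏ p ∈ pairsF k, ((zF k (σ p.1) - q1F k * q2F k * zF k (σ p.2))
        * (zF k (σ p.2) - q1F k * zF k (σ p.1))
        * (zF k (σ p.2) - q2F k * zF k (σ p.1))) with hNumF
  have hw : ∏ p ∈ pairsF k, omegaF (q1F k) (q2F k) (zF k (σ p.1)) (zF k (σ p.2))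
      = NumF / (s * V) := by
    have hden : ∏ p ∈ pairsF k, (zF k (σ p.1) - zF k (σ p.2)) = s * V :=
      vand_sign k (zF k) σ
    rw [← hden, hNumF, ← Finset.prod_div_distrib]
    exact Finset.prod_congr rfl fun p _ => rfl
  have hPM : (∏ i, zF k (σ i) ^ d i) * (∏ i, zF k i ^ m)
      = ∏ i, zF k (σ i) ^ (d i + (m:ℤ)).toNat := by
    rw [show (∏ i, zF k i ^ m) = ∏ i, zF k (σ i) ^ m from (Equiv.prod_comp σ _).symm,
      ← Finset.prod_mul_distrib]
    apply Finset.prod_congr rfl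
    intro i _
    rw [← zpow_natCast (zF k (σ i)) m, ← zpow_add₀ (zF_ne_zero k (σ i)),
      ← zpow_natCast (zF k (σ i)) ((d i + (m:ℤ)).toNat)]
    congr 1
    rw [Int.toNat_of_nonneg (hm i)]
  calc (∏ i, zF k (σ i) ^ d i)
        * (∏ p ∈ pairsF k, omegaF (q1F k) (q2F k) (zF k (σ p.1)) (zF k (σ p.2)))
        * (∏ i, zF k i ^ m) * V
      = ((∏ i, zF k (σ i) ^ d i) * (∏ i, zF k i ^ m)) * (NumF * (s⁻¹ * V⁻¹)) * V := by
        rw [hw, div_eq_mul_inv, mul_inv]; ring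
    _ = (∏ i, zF k (σ i) ^ (d i + (m:ℤ)).toNat) * NumF * s * (V⁻¹ * V) := by
        rw [hPM, hsinv]; ring
    _ = s * ((∏ i, zF k (σ i) ^ (d i + (m:ℤ)).toNat) * NumF) := by
        rw [inv_mul_cancel₀ hVne]; ring
    _ = _ := by
        rw [hNumF]
        congr 1
        congr 1
        · exact Finset.prod_congr rfl fun i _ => (hXze i).symm
        · exact Finset.prod_congr rfl fun p _ => (hnum p).symm


lemma algebraMap_mem_laurent (k : ℕ) (P : Ak k) :
    algebraMap (Ak k) (Fk k) P ∈ laurentSubring (q1F k) (q2F k) (zF k) := by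
  induction P using MvPolynomial.induction_on with
  | C c =>
    have hc : algebraMap (Ak k) (Fk k) (C c) = algebraMap ℂ (Fk k) c := by
      rw [IsScalarTower.algebraMap_apply ℂ (Ak k) (Fk k), MvPolynomial.algebraMap_eq]
    rw [hc]
    exact Subring.subset_closure (Or.inl (Or.inl (Or.inl ⟨c, rfl⟩)))
  | add p q hp hq => rw [map_add]; exact add_mem hp hq
  | mul_X p v hp =>
    rw [map_mul]
    refine mul_mem hp ?_
    rcases v with j | i
    · apply Subring.subset_closure
      refine Or.inl (Or.inl (Or.inr ?_))
      fin_cases j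
      · exact Set.mem_insert _ _
      · exact Set.mem_insert_iff.mpr (Or.inr (Set.mem_insert_iff.mpr
          (Or.inr (Set.mem_insert _ _))))
    · exact Subring.subset_closure (Or.inl (Or.inr ⟨i, rfl⟩))

/-- For every `k ≥ 1` and `d ∈ ℤ^k`, the monomial shuffle element `Sh_k(d)` is a Laurent
polynomial (lies in `R[z1^{±1}, …, zk^{±1}]`), and it is symmetric: it is fixed by every
`ℂ(q1,q2)`-algebra automorphism of `F_k` permuting the variables `z_i ↦ z_{τ(i)}`. -/
theorem sh_isLaurent_and_symmetric (k : ℕ) (hk : 1 ≤ k) (d : Fin k → ℤ) :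
    Sh (q1F k) (q2F k) (zF k) d ∈ laurentSubring (q1F k) (q2F k) (zF k) ∧
    ∀ τ : Equiv.Perm (Fin k),
      permAut k τ (Sh (q1F k) (q2F k) (zF k) d) = Sh (q1F k) (q2F k) (zF k) d := by
  constructor
  · -- Laurent polynomiality
    set m := Finset.univ.sup (fun i => (-(d i)).toNat) with hmdef
    have hm : ∀ i, 0 ≤ d i + m := by
      intro i
      have h1 : (-(d i)).toNat ≤ m := by
        rw [hmdef]; exact Finset.le_sup (f := fun i => (-(d i)).toNat) (Finset.mem_univ i)
      have h2 : -(d i) ≤ ((-(d i)).toNat : ℤ) := Int.self_le_toNat _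
      have h3 : ((-(d i)).toNat : ℤ) ≤ (m : ℤ) := by exact_mod_cast h1
      linarith
    obtain ⟨M₀, hM₀⟩ := Dpoly_dvd_Npoly k (fun i => (d i + m).toNat)
    have hkey := key_identity k d m hm
    rw [hM₀, map_mul] at hkey
    have hMF : (∏ i, zF k i ^ m) ≠ 0 :=
      Finset.prod_ne_zero_iff.mpr (fun i _ => pow_ne_zero _ (zF_ne_zero k i))
    have hDF : algebraMap (Ak k) (Fk k) (Dpoly k) ≠ 0 := by
      rw [map_ne_zero_iff (algebraMap (Ak k) (Fk k)) (IsFractionRing.injective (Ak k) (Fk k)),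
        Dpoly]
      apply Finset.prod_ne_zero_iff.mpr
      intro p hp
      rw [pairsF, mem_filter] at hp
      rw [Xz, Xz, sub_ne_zero]
      exact fun h' => hp.2.ne (Sum.inr_injective (MvPolynomial.X_injective h'))
    have h1 : Sh (q1F k) (q2F k) (zF k) d * (∏ i, zF k i ^ m)
        = algebraMap (Ak k) (Fk k) M₀ := by
      apply mul_right_cancel₀ hDF
      rw [hkey]; ring
    have hSh : Sh (q1F k) (q2F k) (zF k) d
        = algebraMap (Ak k) (Fk k) M₀ * (∏ i, zF k i ^ m)⁻¹ := by
      rw [← h1, mul_assoc, mul_inv_cancel₀ hMF, mul_one]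
    rw [hSh]
    refine mul_mem (algebraMap_mem_laurent k M₀) ?_
    rw [← Finset.prod_inv_distrib]
    refine Subring.prod_mem _ (fun i _ => ?_)
    rw [← inv_pow]
    have hgen : (zF k i)⁻¹ ∈ laurentSubring (q1F k) (q2F k) (zF k) :=
      Subring.subset_closure (Set.mem_union_right _ ⟨i, rfl⟩)
    exact pow_mem hgen m
  · -- symmetry
    intro τ
    have hmap : ∀ P : Ak k, permAut k τ (algebraMap (Ak k) (Fk k) P)
        = algebraMap (Ak k) (Fk k)
            (rename (⇑(Equiv.sumCongr (Equiv.refl (Fin 2)) τ)) P) := by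
      intro P
      rw [permAut, IsFractionRing.ringEquivOfRingEquiv_algebraMap]
      rfl
    have hq1 : permAut k τ (q1F k) = q1F k := by
      rw [q1F, hmap, rename_X]
      rfl
    have hq2 : permAut k τ (q2F k) = q2F k := by
      rw [q2F, hmap, rename_X]
      rfl
    have hz : ∀ i, permAut k τ (zF k i) = zF k (τ i) := by
      intro i
      rw [zF, hmap, rename_X]
      rfl
    have hS : permAut k τ (Sh (q1F k) (q2F k) (zF k) d)
        = Sh (permAut k τ (q1F k)) (permAut k τ (q2F k))
            (fun i => permAut k τ (zF k i)) d :=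
      map_Sh ((permAut k τ) : Fk k →+* Fk k) (q1F k) (q2F k) (zF k) d
    rw [hS, hq1, hq2, show (fun i => permAut k τ (zF k i)) = fun i => zF k (τ i)
      from funext hz]
    exact Sh_comp (q1F k) (q2F k) (zF k) d τ

end
end

section
/- (Wheel conditions.) For every k ≥ 3 and every d = (d1, …, dk) ∈ ℤ^k, the monomial shuffle element Sh_k(d) vanishes under the wheel substitution: substituting z1 = q1·q2·t, z2 = q2·t, z3 = t (so that z1/z2 = q1, z2/z3 = q2, z3/z1 = 1/q) into Sh_k(d) yields 0 in the field ℂ(q1, q2, t, z4, …, zk). -/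
open MvPolynomial Finset

noncomputable section

/-- Wheel conditions: for every `k ≥ 3` (written `k = m + 3`) and `d ∈ ℤ^k`, substituting
`z1 = q1·q2·t, z2 = q2·t, z3 = t` (so `z1/z2 = q1`, `z2/z3 = q2`, `z3/z1 = 1/q`; here the fresh
variable `t` is realized as the variable `z3`, so the result lives in `ℂ(q1, q2, t, z4, …, zk)`)
into `Sh_k(d)` yields `0`. -/
theorem sh_wheel_conditions (m : ℕ) (d : Fin (m + 3) → ℤ) :
    Sh (q1F (m + 3)) (q2F (m + 3))
      (fun i => if i = 0 then q1F (m + 3) * q2F (m + 3) * zF (m + 3) 2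
                else if i = 1 then q2F (m + 3) * zF (m + 3) 2
                else zF (m + 3) i) d = 0 := by
  set q1 := q1F (m + 3) with hq1
  set q2 := q2F (m + 3) with hq2
  set t := zF (m + 3) 2 with ht
  set z : Fin (m + 3) → Fk (m + 3) :=
    fun i => if i = 0 then q1 * q2 * t else if i = 1 then q2 * t else zF (m + 3) i with hzdef
  rw [Sh]
  apply Finset.sum_eq_zero
  intro σ _
  have h01 : (0 : Fin (m + 3)) ≠ 1 := by
    simp [Fin.ext_iff]
  have h12 : (1 : Fin (m + 3)) ≠ 2 := by
    simp [Fin.ext_iff, Nat.mod_eq_of_lt (show 2 < m + 3 by omega)]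
  have h02 : (0 : Fin (m + 3)) ≠ 2 := by
    simp [Fin.ext_iff, Nat.mod_eq_of_lt (show 2 < m + 3 by omega)]
  have hz0 : z (σ (σ⁻¹ 0)) = q1 * q2 * t := by simp [hzdef]
  have hz1 : z (σ (σ⁻¹ 1)) = q2 * t := by simp [hzdef, h01.symm]
  have hz2 : z (σ (σ⁻¹ 2)) = t := by simp [hzdef, h02.symm, h12.symm, ht]
  have e1 : omegaF q1 q2 (q2 * t) (q1 * q2 * t) = 0 := by
    unfold omegaF
    rw [show q1 * q2 * t - q1 * (q2 * t) = 0 by ring]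
    simp
  have e2 : omegaF q1 q2 t (q2 * t) = 0 := by
    unfold omegaF
    rw [show q2 * t - q2 * t = 0 by ring]
    simp
  have e3 : omegaF q1 q2 (q1 * q2 * t) t = 0 := by
    unfold omegaF
    rw [show q1 * q2 * t - q1 * q2 * t = 0 by ring]
    simp
  have key : ∃ p : Fin (m + 3) × Fin (m + 3), p.1 < p.2 ∧
      omegaF q1 q2 (z (σ p.1)) (z (σ p.2)) = 0 := by
    have hab : σ⁻¹ 1 ≠ σ⁻¹ 0 := fun h => h01 (σ⁻¹.injective h).symm
    have hbc : σ⁻¹ 2 ≠ σ⁻¹ 1 := fun h => h12 (σ⁻¹.injective h).symm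
    rcases hab.lt_or_gt with h | h
    · exact ⟨(σ⁻¹ 1, σ⁻¹ 0), h, by rw [hz1, hz0]; exact e1⟩
    · rcases hbc.lt_or_gt with h' | h'
      · exact ⟨(σ⁻¹ 2, σ⁻¹ 1), h', by rw [hz2, hz1]; exact e2⟩
      · exact ⟨(σ⁻¹ 0, σ⁻¹ 2), h.trans h', by rw [hz0, hz2]; exact e3⟩
  obtain ⟨p, hp, hω⟩ := key
  rw [mul_eq_zero]
  right
  exact Finset.prod_eq_zero (by simp [hp]) hω

end
end

section
/- For every k ≥ 1, every n ∈ ℤ, and every d = (d1, …, dk) ∈ ℤ^k, the following identity holds in F_k: (z1^n + z2^n + ⋯ + zk^n) · Sh_k(d1, …, dk) = Σ_{i=1}^{k} Sh_k(d1, …, d_{i−1}, d_i + n, d_{i+1}, …, dk). -/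
open MvPolynomial Finset

noncomputable section

/-- For every `k ≥ 1`, `n ∈ ℤ`, `d ∈ ℤ^k`:
`(z1^n + ⋯ + zk^n) · Sh_k(d) = Σ_{i=1}^k Sh_k(d1, …, d_i + n, …, dk)` in `F_k`. -/
theorem sh_mul_power_sum (k : ℕ) (hk : 1 ≤ k) (n : ℤ) (d : Fin k → ℤ) :
    (∑ i, zF k i ^ n) * Sh (q1F k) (q2F k) (zF k) d =
      ∑ i, Sh (q1F k) (q2F k) (zF k) (Function.update d i (d i + n)) := by
  have hz : ∀ i, zF k i ≠ 0 := fun i h =>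
    MvPolynomial.X_ne_zero (Sum.inr i)
      ((map_eq_zero_iff _ (IsFractionRing.injective (MvPolynomial (Fin 2 ⊕ Fin k) ℂ) (Fk k))).mp h)
  unfold Sh
  rw [Finset.sum_comm, Finset.mul_sum]
  refine Finset.sum_congr rfl fun σ _ => ?_
  have key : ∀ i : Fin k, (∏ j, zF k (σ j) ^ (Function.update d i (d i + n) j)) =
      zF k (σ i) ^ n * ∏ j, zF k (σ j) ^ d j := by
    intro i
    rw [← Finset.mul_prod_erase Finset.univ
          (fun j => zF k (σ j) ^ (Function.update d i (d i + n) j)) (Finset.mem_univ i),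
        ← Finset.mul_prod_erase Finset.univ (fun j => zF k (σ j) ^ d j) (Finset.mem_univ i)]
    rw [Function.update_self, zpow_add₀ (hz (σ i)), mul_comm (zF k (σ i) ^ d i),
      mul_assoc]
    congr 1
    congr 1
    refine Finset.prod_congr rfl fun j hj => ?_
    rw [Function.update_of_ne (Finset.ne_of_mem_erase hj)]
  calc (∑ i, zF k i ^ n) * ((∏ i, zF k (σ i) ^ d i) *
        ∏ p ∈ Finset.univ.filter (fun p : Fin k × Fin k => p.1 < p.2),
          omegaF (q1F k) (q2F k) (zF k (σ p.1)) (zF k (σ p.2)))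
      = (∑ i, zF k (σ i) ^ n) * ((∏ i, zF k (σ i) ^ d i) *
        ∏ p ∈ Finset.univ.filter (fun p : Fin k × Fin k => p.1 < p.2),
          omegaF (q1F k) (q2F k) (zF k (σ p.1)) (zF k (σ p.2))) := by
        rw [Equiv.sum_comp σ (fun i => zF k i ^ n)]
    _ = ∑ i, (∏ j, zF k (σ j) ^ (Function.update d i (d i + n) j)) *
        ∏ p ∈ Finset.univ.filter (fun p : Fin k × Fin k => p.1 < p.2),
          omegaF (q1F k) (q2F k) (zF k (σ p.1)) (zF k (σ p.2)) := by
        rw [Finset.sum_mul]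
        refine Finset.sum_congr rfl fun i _ => ?_
        rw [key i, mul_assoc]

end
end

section
/- (A^R_2 is generated by 1₁*1₁ and z₁*1₁.) For every (d1, d2) ∈ ℤ², there exist Laurent polynomials a, b ∈ R[z1^{±1}, z2^{±1}], each symmetric under exchanging z1 and z2, such that Sh_2(d1, d2) = a · Sh_2(0, 0) + b · Sh_2(1, 0). -/
open MvPolynomial Finset

noncomputable section

/-! ### Auxiliary definitions and lemmas for the proof -/

/-- Geometric-type sum `∑_{i<n} x^i y^{n-1-i}`, satisfying `gsum·(x−y) = x^n − y^n`. -/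
def gsum {K : Type*} [Field K] (w1 w2 : K) (n : ℕ) : K :=
  ∑ i ∈ Finset.range n, w1 ^ i * w2 ^ (n - 1 - i)

/-- The symmetric Laurent polynomial `b = (w1^{d1} w2^{d2} − w2^{d1} w1^{d2})/(w1 − w2)`. -/
def bB {K : Type*} [Field K] (w1 w2 : K) (d1 d2 : ℤ) : K :=
  if d2 ≤ d1 then w1 ^ d2 * w2 ^ d2 * gsum w1 w2 (d1 - d2).natAbs
  else -(w1 ^ d1 * w2 ^ d1 * gsum w1 w2 (d1 - d2).natAbs)

/-- The symmetric Laurent polynomial `a = w1^{d1} w2^{d2} − b·w1`. -/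
def aB {K : Type*} [Field K] (w1 w2 : K) (d1 d2 : ℤ) : K :=
  w1 ^ d1 * w2 ^ d2 - bB w1 w2 d1 d2 * w1

lemma gsum_comm {K : Type*} [Field K] (w1 w2 : K) (n : ℕ) : gsum w2 w1 n = gsum w1 w2 n := by
  unfold gsum
  conv_rhs => rw [← Finset.sum_range_reflect]
  refine Finset.sum_congr rfl fun i hi => ?_
  simp only [Finset.mem_range] at hi
  rw [show n - 1 - (n - 1 - i) = i by omega, mul_comm]

lemma gsum_mul {K : Type*} [Field K] (w1 w2 : K) (n : ℕ) :
    gsum w1 w2 n * (w1 - w2) = w1 ^ n - w2 ^ n := geom_sum₂_mul w1 w2 n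

lemma bB_mul {K : Type*} [Field K] {w1 w2 : K} (hw1 : w1 ≠ 0) (hw2 : w2 ≠ 0) (d1 d2 : ℤ) :
    bB w1 w2 d1 d2 * (w1 - w2) = w1 ^ d1 * w2 ^ d2 - w2 ^ d1 * w1 ^ d2 := by
  unfold bB
  split_ifs with h
  · obtain ⟨m, rfl⟩ : ∃ m : ℕ, d1 = d2 + m := ⟨(d1 - d2).natAbs, by omega⟩
    rw [show ((d2 + (m : ℤ)) - d2).natAbs = m from by omega, zpow_add₀ hw1, zpow_add₀ hw2,
      zpow_natCast, zpow_natCast]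
    linear_combination (w1 ^ d2 * w2 ^ d2) * gsum_mul w1 w2 m
  · obtain ⟨m, rfl⟩ : ∃ m : ℕ, d2 = d1 + m := ⟨(d2 - d1).natAbs, by omega⟩
    rw [show (d1 - (d1 + (m : ℤ))).natAbs = m from by omega, zpow_add₀ hw1, zpow_add₀ hw2,
      zpow_natCast, zpow_natCast]
    linear_combination (-(w1 ^ d1 * w2 ^ d1)) * gsum_mul w1 w2 m

lemma bB_swap {K : Type*} [Field K] (w1 w2 : K) (d1 d2 : ℤ) :
    bB w2 w1 d1 d2 = bB w1 w2 d1 d2 := by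
  unfold bB
  rw [gsum_comm]
  split_ifs <;> ring

lemma aB_swap {K : Type*} [Field K] {w1 w2 : K} (hw1 : w1 ≠ 0) (hw2 : w2 ≠ 0) (d1 d2 : ℤ) :
    aB w2 w1 d1 d2 = aB w1 w2 d1 d2 := by
  unfold aB
  rw [bB_swap]
  linear_combination bB_mul hw1 hw2 d1 d2

lemma map_gsum {K L : Type*} [Field K] [Field L] (ψ : K ≃+* L) (w1 w2 : K) (n : ℕ) :
    ψ (gsum w1 w2 n) = gsum (ψ w1) (ψ w2) n := by
  unfold gsum
  simp [map_sum, map_mul, map_pow]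

lemma map_bB {K L : Type*} [Field K] [Field L] (ψ : K ≃+* L) (w1 w2 : K) (d1 d2 : ℤ) :
    ψ (bB w1 w2 d1 d2) = bB (ψ w1) (ψ w2) d1 d2 := by
  unfold bB
  rw [apply_ite ψ]
  simp only [map_mul, map_neg, map_zpow₀, map_gsum]

lemma map_aB {K L : Type*} [Field K] [Field L] (ψ : K ≃+* L) (w1 w2 : K) (d1 d2 : ℤ) :
    ψ (aB w1 w2 d1 d2) = aB (ψ w1) (ψ w2) d1 d2 := by
  unfold aB
  rw [map_sub, map_mul, map_mul, map_zpow₀, map_zpow₀, map_bB]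

lemma Sh_two {K : Type*} [Field K] (q1 q2 : K) (z : Fin 2 → K) (d : Fin 2 → ℤ) :
    Sh q1 q2 z d = z 0 ^ d 0 * z 1 ^ d 1 * omegaF q1 q2 (z 0) (z 1)
      + z 1 ^ d 0 * z 0 ^ d 1 * omegaF q1 q2 (z 1) (z 0) := by
  have huniv : (Finset.univ : Finset (Equiv.Perm (Fin 2))) = {1, Equiv.swap 0 1} := by decide
  have hfilt : (Finset.univ.filter (fun p : Fin 2 × Fin 2 => p.1 < p.2))
      = {((0 : Fin 2), (1 : Fin 2))} := by decide
  have hne : (1 : Equiv.Perm (Fin 2)) ≠ Equiv.swap 0 1 := by decide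
  rw [Sh, huniv, hfilt, Finset.sum_pair hne]
  simp [Fin.prod_univ_two, Equiv.swap_apply_left, Equiv.swap_apply_right]

lemma Sh_aB {K : Type*} [Field K] (q1 q2 : K) (z : Fin 2 → K) (h0 : z 0 ≠ 0) (h1 : z 1 ≠ 0)
    (d1 d2 : ℤ) :
    Sh q1 q2 z ![d1, d2] = aB (z 0) (z 1) d1 d2 * Sh q1 q2 z ![0, 0]
      + bB (z 0) (z 1) d1 d2 * Sh q1 q2 z ![1, 0] := by
  rw [Sh_two, Sh_two, Sh_two]
  simp only [Matrix.cons_val_zero, Matrix.cons_val_one, Matrix.head_cons, zpow_zero, zpow_one,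
    one_mul, mul_one]
  rw [aB]
  linear_combination (omegaF q1 q2 (z 1) (z 0)) * bB_mul h0 h1 d1 d2

lemma zpow_mem_subring {K : Type*} [Field K] (S : Subring K) {x : K}
    (hx : x ∈ S) (hxi : x⁻¹ ∈ S) (d : ℤ) : x ^ d ∈ S := by
  obtain ⟨n, rfl | rfl⟩ := d.eq_nat_or_neg
  · simpa using pow_mem hx n
  · rw [zpow_neg, ← inv_zpow, zpow_natCast]
    exact pow_mem hxi n

/-- `A^R_2` is generated by `1₁*1₁ = Sh_2(0,0)` and `z₁*1₁ = Sh_2(1,0)`: for every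
`(d1, d2) ∈ ℤ²` there are Laurent polynomials `a, b ∈ R[z1^{±1}, z2^{±1}]`, each symmetric
under exchanging `z1` and `z2`, with `Sh_2(d1, d2) = a·Sh_2(0,0) + b·Sh_2(1,0)`. -/
theorem AR2_generated_by_two (d1 d2 : ℤ) :
    ∃ a b : Fk 2,
      a ∈ laurentSubring (q1F 2) (q2F 2) (zF 2) ∧
      b ∈ laurentSubring (q1F 2) (q2F 2) (zF 2) ∧
      permAut 2 (Equiv.swap 0 1) a = a ∧
      permAut 2 (Equiv.swap 0 1) b = b ∧
      Sh (q1F 2) (q2F 2) (zF 2) ![d1, d2] =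
        a * Sh (q1F 2) (q2F 2) (zF 2) ![0, 0] + b * Sh (q1F 2) (q2F 2) (zF 2) ![1, 0] := by
  classical
  set S := laurentSubring (q1F 2) (q2F 2) (zF 2) with hS
  set φ := permAut 2 (Equiv.swap (0 : Fin 2) 1) with hφ
  have hz0 : ∀ i : Fin 2, zF 2 i ≠ 0 := by
    intro i
    simp only [zF, ne_eq, IsFractionRing.to_map_eq_zero_iff]
    exact MvPolynomial.X_ne_zero _
  have hφz : ∀ i : Fin 2, φ (zF 2 i) = zF 2 (Equiv.swap 0 1 i) := by
    intro i
    simp only [hφ, permAut, zF, IsFractionRing.ringEquivOfRingEquiv_algebraMap]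
    fin_cases i <;> simp
  have hφ1 : φ (zF 2 0) = zF 2 1 := by rw [hφz 0, Equiv.swap_apply_left]
  have hφ2 : φ (zF 2 1) = zF 2 0 := by rw [hφz 1, Equiv.swap_apply_right]
  have hzS : ∀ i : Fin 2, zF 2 i ∈ S := fun i =>
    Subring.subset_closure (Or.inl (Or.inr ⟨i, rfl⟩))
  have hziS : ∀ i : Fin 2, (zF 2 i)⁻¹ ∈ S := fun i =>
    Subring.subset_closure (Or.inr ⟨i, rfl⟩)
  have hzp : ∀ (i : Fin 2) (d : ℤ), zF 2 i ^ d ∈ S := fun i d =>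
    zpow_mem_subring S (hzS i) (hziS i) d
  have hgS : ∀ n : ℕ, gsum (zF 2 0) (zF 2 1) n ∈ S := fun n =>
    sum_mem fun i _ => mul_mem (pow_mem (hzS 0) i) (pow_mem (hzS 1) _)
  have hbS : bB (zF 2 0) (zF 2 1) d1 d2 ∈ S := by
    unfold bB
    split_ifs
    · exact mul_mem (mul_mem (hzp 0 d2) (hzp 1 d2)) (hgS _)
    · exact neg_mem (mul_mem (mul_mem (hzp 0 d1) (hzp 1 d1)) (hgS _))
  have haS : aB (zF 2 0) (zF 2 1) d1 d2 ∈ S := by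
    unfold aB
    exact sub_mem (mul_mem (hzp 0 d1) (hzp 1 d2)) (mul_mem hbS (hzS 0))
  have hφb : φ (bB (zF 2 0) (zF 2 1) d1 d2) = bB (zF 2 0) (zF 2 1) d1 d2 := by
    rw [map_bB, hφ1, hφ2, bB_swap]
  have hφa : φ (aB (zF 2 0) (zF 2 1) d1 d2) = aB (zF 2 0) (zF 2 1) d1 d2 := by
    rw [map_aB, hφ1, hφ2, aB_swap (hz0 0) (hz0 1)]
  exact ⟨aB (zF 2 0) (zF 2 1) d1 d2, bB (zF 2 0) (zF 2 1) d1 d2, haS, hbS, hφa, hφb,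
    Sh_aB _ _ _ (hz0 0) (hz0 1) d1 d2⟩

end
end

section
/- (A^R_3 is generated by six elements as a V_3-module.) For every (d1, d2, d3) ∈ ℤ³, there exist Laurent polynomials c_{e1,e2} ∈ R[z1^{±1}, z2^{±1}, z3^{±1}] for 0 ≤ e1 ≤ 2 and 0 ≤ e2 ≤ 1, each symmetric under all permutations of z1, z2, z3, such that Sh_3(d1, d2, d3) = Σ_{0 ≤ e1 ≤ 2, 0 ≤ e2 ≤ 1} c_{e1,e2} · Sh_3(e1, e2, 0). -/
set_option synthInstance.maxHeartbeats 1000000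


open MvPolynomial Finset

noncomputable section

namespace AR3aux

/-- generic 3-term recurrence closure lemma -/
theorem keyrec {R M : Type*} [CommRing R] [AddCommGroup M] [Module R M] (N : Submodule R M)
    (f : ℤ → M) (a b c ci : R) (hci : ci * c = 1)
    (hrec : ∀ n : ℤ, f (n + 3) = a • f (n + 2) + b • f (n + 1) + c • f n)
    (h0 : f 0 ∈ N) (h1 : f 1 ∈ N) (h2 : f 2 ∈ N) : ∀ n : ℤ, f n ∈ N := by
  have up : ∀ m : ℕ, f m ∈ N ∧ f ((m : ℤ) + 1) ∈ N ∧ f ((m : ℤ) + 2) ∈ N := by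
    intro m
    induction m with
    | zero => exact ⟨h0, by norm_num [h1], by norm_num [h2]⟩
    | succ k ih =>
        have e1 : ((k + 1 : ℕ) : ℤ) = (k : ℤ) + 1 := by push_cast; ring
        have e2 : ((k + 1 : ℕ) : ℤ) + 1 = (k : ℤ) + 2 := by push_cast; ring
        have e3 : ((k + 1 : ℕ) : ℤ) + 2 = (k : ℤ) + 3 := by push_cast; ring
        refine ⟨by rw [e1]; exact ih.2.1, by rw [e2]; exact ih.2.2, ?_⟩
        rw [e3, hrec k]
        exact N.add_mem (N.add_mem (N.smul_mem _ ih.2.2) (N.smul_mem _ ih.2.1)) (N.smul_mem _ ih.1)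
  have down : ∀ m : ℕ, f (-(m : ℤ)) ∈ N ∧ f (-(m : ℤ) + 1) ∈ N ∧ f (-(m : ℤ) + 2) ∈ N := by
    intro m
    induction m with
    | zero => exact ⟨h0, by norm_num [h1], by norm_num [h2]⟩
    | succ k ih =>
        have key : f (-(k : ℤ) - 1) ∈ N := by
          have hr := hrec (-(k : ℤ) - 1)
          have h2' : (-(k : ℤ) - 1) + 3 = -(k : ℤ) + 2 := by ring
          have h1' : (-(k : ℤ) - 1) + 2 = -(k : ℤ) + 1 := by ring
          have h0' : (-(k : ℤ) - 1) + 1 = -(k : ℤ) := by ring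
          rw [h2', h1', h0'] at hr
          have hc : c • f (-(k : ℤ) - 1) =
              f (-(k : ℤ) + 2) - a • f (-(k : ℤ) + 1) - b • f (-(k : ℤ)) := by
            rw [hr]; abel
          have heq : f (-(k : ℤ) - 1) =
              ci • (f (-(k : ℤ) + 2) - a • f (-(k : ℤ) + 1) - b • f (-(k : ℤ))) := by
            rw [← hc, ← mul_smul, hci, one_smul]
          rw [heq]
          exact N.smul_mem _ (N.sub_mem (N.sub_mem ih.2.2 (N.smul_mem _ ih.2.1)) (N.smul_mem _ ih.1))
        have e1 : -((k + 1 : ℕ) : ℤ) = -(k : ℤ) - 1 := by push_cast; ring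
        have e2 : -((k + 1 : ℕ) : ℤ) + 1 = -(k : ℤ) := by push_cast; ring
        have e3 : -((k + 1 : ℕ) : ℤ) + 2 = -(k : ℤ) + 1 := by push_cast; ring
        exact ⟨by rw [e1]; exact key, by rw [e2]; exact ih.1, by rw [e3]; exact ih.2.1⟩
  intro n
  obtain ⟨m, rfl | rfl⟩ := Int.eq_nat_or_neg n
  · exact (up m).1
  · exact (down m).1

/-- The subring of symmetric Laurent polynomials. -/
def ΛL : Subring (Fk 3) :=
  laurentSubring (q1F 3) (q2F 3) (zF 3) ⊓
    ⨅ τ : Equiv.Perm (Fin 3), RingHom.eqLocus ((permAut 3 τ).toRingHom) (RingHom.id _)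

lemma mem_ΛL {x : Fk 3} :
    x ∈ ΛL ↔ x ∈ laurentSubring (q1F 3) (q2F 3) (zF 3) ∧ ∀ τ, permAut 3 τ x = x := by
  constructor
  · rintro ⟨h1, h2⟩
    exact ⟨h1, fun τ => Subring.mem_iInf.mp h2 τ⟩
  · rintro ⟨h1, h2⟩
    exact ⟨h1, Subring.mem_iInf.mpr fun τ => h2 τ⟩

lemma z_ne (i : Fin 3) : zF 3 i ≠ 0 := by simp [zF]

lemma permAut_z (τ : Equiv.Perm (Fin 3)) (i : Fin 3) : permAut 3 τ (zF 3 i) = zF 3 (τ i) := by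
  simp [permAut, zF]

lemma z_mem_laurent (i : Fin 3) : zF 3 i ∈ laurentSubring (q1F 3) (q2F 3) (zF 3) :=
  Subring.subset_closure (Or.inl (Or.inr ⟨i, rfl⟩))

lemma zinv_mem_laurent (i : Fin 3) : (zF 3 i)⁻¹ ∈ laurentSubring (q1F 3) (q2F 3) (zF 3) :=
  Subring.subset_closure (Or.inr ⟨i, rfl⟩)

/-- elementary symmetric data -/
def E1 : Fk 3 := ∑ i, zF 3 i
def E3 : Fk 3 := ∏ i, zF 3 i
def Sinv : Fk 3 := ∑ i, (zF 3 i)⁻¹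
def E2 : Fk 3 := E3 * Sinv
def E3inv : Fk 3 := ∏ i, (zF 3 i)⁻¹

lemma E3_ne : E3 ≠ 0 := Finset.prod_ne_zero_iff.mpr fun i _ => z_ne i

lemma E3inv_eq : E3inv = E3⁻¹ := by
  rw [E3, E3inv, ← Finset.prod_inv_distrib]

lemma E1_mem : E1 ∈ ΛL := by
  rw [mem_ΛL]
  refine ⟨Subring.sum_mem _ fun i _ => z_mem_laurent i, fun τ => ?_⟩
  rw [E1, map_sum]
  simp only [permAut_z]
  exact Equiv.sum_comp τ (fun i => zF 3 i)

lemma E3_mem : E3 ∈ ΛL := by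
  rw [mem_ΛL]
  refine ⟨Subring.prod_mem _ fun i _ => z_mem_laurent i, fun τ => ?_⟩
  rw [E3, map_prod]
  simp only [permAut_z]
  exact Equiv.prod_comp τ (fun i => zF 3 i)

lemma Sinv_mem : Sinv ∈ ΛL := by
  rw [mem_ΛL]
  refine ⟨Subring.sum_mem _ fun i _ => zinv_mem_laurent i, fun τ => ?_⟩
  rw [Sinv, map_sum]
  simp only [map_inv₀, permAut_z]
  exact Equiv.sum_comp τ (fun i => (zF 3 i)⁻¹)

lemma E2_mem : E2 ∈ ΛL := mul_mem E3_mem Sinv_mem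

lemma E3inv_mem : E3inv ∈ ΛL := by
  rw [mem_ΛL]
  refine ⟨Subring.prod_mem _ fun i _ => zinv_mem_laurent i, fun τ => ?_⟩
  rw [E3inv, map_prod]
  simp only [map_inv₀, permAut_z]
  exact Equiv.prod_comp τ (fun i => (zF 3 i)⁻¹)

lemma E3_zpow_mem (m : ℤ) : E3 ^ m ∈ ΛL := by
  cases m with
  | ofNat n => rw [Int.ofNat_eq_coe, zpow_natCast]; exact pow_mem E3_mem n
  | negSucc n =>
      rw [zpow_negSucc, ← inv_pow, ← E3inv_eq]
      exact pow_mem E3inv_mem (n + 1)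

/-- the function space indexed by permutations -/
abbrev FF : Type := Equiv.Perm (Fin 3) → Fk 3

def Zf (a b c : ℤ) : FF := fun σ => zF 3 (σ 0) ^ a * zF 3 (σ 1) ^ b * zF 3 (σ 2) ^ c

lemma smul_apply' (r : ΛL) (f : FF) (σ : Equiv.Perm (Fin 3)) :
    (r • f) σ = (r : Fk 3) * f σ := rfl

lemma smul_eq' (r : ΛL) (x : Fk 3) : r • x = (r : Fk 3) * x := rfl

lemma E1_eq (σ : Equiv.Perm (Fin 3)) : E1 = zF 3 (σ 0) + zF 3 (σ 1) + zF 3 (σ 2) := by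
  rw [E1, ← Equiv.sum_comp σ (fun i => zF 3 i), Fin.sum_univ_three]

lemma E3_eq (σ : Equiv.Perm (Fin 3)) : E3 = zF 3 (σ 0) * zF 3 (σ 1) * zF 3 (σ 2) := by
  rw [E3, ← Equiv.prod_comp σ (fun i => zF 3 i), Fin.prod_univ_three]

lemma E2_eq (σ : Equiv.Perm (Fin 3)) :
    E2 = zF 3 (σ 0) * zF 3 (σ 1) + zF 3 (σ 0) * zF 3 (σ 2) + zF 3 (σ 1) * zF 3 (σ 2) := by
  have hs : Sinv = (zF 3 (σ 0))⁻¹ + (zF 3 (σ 1))⁻¹ + (zF 3 (σ 2))⁻¹ := by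
    rw [Sinv, ← Equiv.sum_comp σ (fun i => (zF 3 i)⁻¹), Fin.sum_univ_three]
  rw [E2, hs, E3_eq σ]
  field_simp [z_ne]
  ring

/-- generators -/
def G : Fin 3 × Fin 2 → FF := fun e => Zf ((e.1 : ℕ) : ℤ) ((e.2 : ℕ) : ℤ) 0

def V : Submodule ΛL FF := Submodule.span ΛL (Set.range G)

lemma G_mem (e : Fin 3 × Fin 2) : G e ∈ V := Submodule.subset_span ⟨e, rfl⟩

/-- the three slot-1 recurrence -/
lemma rec1 (b c : ℤ) (n : ℤ) :
    Zf (n + 3) b c = (⟨E1, E1_mem⟩ : ΛL) • Zf (n + 2) b c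
      + (⟨-E2, neg_mem E2_mem⟩ : ΛL) • Zf (n + 1) b c
      + (⟨E3, E3_mem⟩ : ΛL) • Zf n b c := by
  funext σ
  simp only [Pi.add_apply, smul_apply']
  have hX := z_ne (σ 0)
  have p1 : zF 3 (σ 0) ^ (n+1) = zF 3 (σ 0) ^ n * zF 3 (σ 0) := zpow_add_one₀ hX n
  have p2 : zF 3 (σ 0) ^ (n+2) = zF 3 (σ 0) ^ (n+1) * zF 3 (σ 0) := by
    rw [show n+2 = n+1+1 by ring]; exact zpow_add_one₀ hX (n+1)
  have p3 : zF 3 (σ 0) ^ (n+3) = zF 3 (σ 0) ^ (n+2) * zF 3 (σ 0) := by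
    rw [show n+3 = n+2+1 by ring]; exact zpow_add_one₀ hX (n+2)
  show Zf (n+3) b c σ = E1 * Zf (n+2) b c σ + (-E2) * Zf (n+1) b c σ + E3 * Zf n b c σ
  simp only [Zf, p1, p2, p3, E1_eq σ, E2_eq σ, E3_eq σ]
  ring

/-- the three slot-2 recurrence -/
lemma rec2 (a c : ℤ) (n : ℤ) :
    Zf a (n + 3) c = (⟨E1, E1_mem⟩ : ΛL) • Zf a (n + 2) c
      + (⟨-E2, neg_mem E2_mem⟩ : ΛL) • Zf a (n + 1) c
      + (⟨E3, E3_mem⟩ : ΛL) • Zf a n c := by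
  funext σ
  simp only [Pi.add_apply, smul_apply']
  have hY := z_ne (σ 1)
  have p1 : zF 3 (σ 1) ^ (n+1) = zF 3 (σ 1) ^ n * zF 3 (σ 1) := zpow_add_one₀ hY n
  have p2 : zF 3 (σ 1) ^ (n+2) = zF 3 (σ 1) ^ (n+1) * zF 3 (σ 1) := by
    rw [show n+2 = n+1+1 by ring]; exact zpow_add_one₀ hY (n+1)
  have p3 : zF 3 (σ 1) ^ (n+3) = zF 3 (σ 1) ^ (n+2) * zF 3 (σ 1) := by
    rw [show n+3 = n+2+1 by ring]; exact zpow_add_one₀ hY (n+2)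
  show Zf a (n+3) c σ = E1 * Zf a (n+2) c σ + (-E2) * Zf a (n+1) c σ + E3 * Zf a n c σ
  simp only [Zf, p1, p2, p3, E1_eq σ, E2_eq σ, E3_eq σ]
  ring

/-- diagonal shift -/
lemma shift (m a b c : ℤ) :
    Zf (a + m) (b + m) (c + m) = (⟨E3 ^ m, E3_zpow_mem m⟩ : ΛL) • Zf a b c := by
  funext σ
  simp only [smul_apply']
  show Zf (a+m) (b+m) (c+m) σ = E3 ^ m * Zf a b c σ
  simp only [Zf, E3_eq σ, zpow_add₀ (z_ne _), mul_zpow]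
  ring

lemma hci : ((⟨E3inv, E3inv_mem⟩ : ΛL) * ⟨E3, E3_mem⟩) = 1 := by
  ext
  show E3inv * E3 = 1
  rw [E3inv_eq]
  exact inv_mul_cancel₀ E3_ne

/-- base cases coming from generators -/
lemma base00 : Zf 0 0 0 ∈ V := by simpa [G] using G_mem (0, 0)
lemma base10 : Zf 1 0 0 ∈ V := by simpa [G] using G_mem (1, 0)
lemma base20 : Zf 2 0 0 ∈ V := by simpa [G] using G_mem (2, 0)
lemma base01 : Zf 0 1 0 ∈ V := by simpa [G] using G_mem (0, 1)
lemma base11 : Zf 1 1 0 ∈ V := by simpa [G] using G_mem (1, 1)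
lemma base21 : Zf 2 1 0 ∈ V := by simpa [G] using G_mem (2, 1)

/-- the three special identities -/
lemma S02 : Zf 0 2 0 ∈ V := by
  have h : Zf 0 2 0 = (⟨-E2, neg_mem E2_mem⟩ : ΛL) • Zf 0 0 0 + (⟨E1, E1_mem⟩ : ΛL) • Zf 0 1 0
      + (⟨E1, E1_mem⟩ : ΛL) • Zf 1 0 0 + (⟨-1, neg_mem (one_mem _)⟩ : ΛL) • Zf 1 1 0
      + (⟨-1, neg_mem (one_mem _)⟩ : ΛL) • Zf 2 0 0 := by
    funext σ
    simp only [Pi.add_apply, smul_apply']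
    show Zf 0 2 0 σ = (-E2) * Zf 0 0 0 σ + E1 * Zf 0 1 0 σ + E1 * Zf 1 0 0 σ
      + (-1) * Zf 1 1 0 σ + (-1) * Zf 2 0 0 σ
    simp only [Zf, E1_eq σ, E2_eq σ, zpow_zero, zpow_one, zpow_two]
    ring
  rw [h]
  exact add_mem (add_mem (add_mem (add_mem (Submodule.smul_mem _ _ base00)
    (Submodule.smul_mem _ _ base01)) (Submodule.smul_mem _ _ base10))
    (Submodule.smul_mem _ _ base11)) (Submodule.smul_mem _ _ base20)

lemma S12 : Zf 1 2 0 ∈ V := by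
  have h : Zf 1 2 0 = (⟨-E3, neg_mem E3_mem⟩ : ΛL) • Zf 0 0 0 + (⟨E1, E1_mem⟩ : ΛL) • Zf 1 1 0
      + (⟨-1, neg_mem (one_mem _)⟩ : ΛL) • Zf 2 1 0 := by
    funext σ
    simp only [Pi.add_apply, smul_apply']
    show Zf 1 2 0 σ = (-E3) * Zf 0 0 0 σ + E1 * Zf 1 1 0 σ + (-1) * Zf 2 1 0 σ
    simp only [Zf, E1_eq σ, E3_eq σ, zpow_zero, zpow_one, zpow_two]
    ring
  rw [h]
  exact add_mem (add_mem (Submodule.smul_mem _ _ base00) (Submodule.smul_mem _ _ base11))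
    (Submodule.smul_mem _ _ base21)

lemma S22 : Zf 2 2 0 ∈ V := by
  have h : Zf 2 2 0 = (⟨-E3, neg_mem E3_mem⟩ : ΛL) • Zf 0 1 0 + (⟨-E3, neg_mem E3_mem⟩ : ΛL) • Zf 1 0 0
      + (⟨E2, E2_mem⟩ : ΛL) • Zf 1 1 0 := by
    funext σ
    simp only [Pi.add_apply, smul_apply']
    show Zf 2 2 0 σ = (-E3) * Zf 0 1 0 σ + (-E3) * Zf 1 0 0 σ + E2 * Zf 1 1 0 σ
    simp only [Zf, E2_eq σ, E3_eq σ, zpow_zero, zpow_one, zpow_two]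
    ring
  rw [h]
  exact add_mem (add_mem (Submodule.smul_mem _ _ base01) (Submodule.smul_mem _ _ base10))
    (Submodule.smul_mem _ _ base11)

lemma A0 : ∀ a : ℤ, Zf a 0 0 ∈ V :=
  keyrec V (fun n => Zf n 0 0) _ _ _ _ hci (rec1 0 0) base00 base10 base20

lemma A1 : ∀ a : ℤ, Zf a 1 0 ∈ V :=
  keyrec V (fun n => Zf n 1 0) _ _ _ _ hci (rec1 1 0) base01 base11 base21

lemma A2 : ∀ a : ℤ, Zf a 2 0 ∈ V :=
  keyrec V (fun n => Zf n 2 0) _ _ _ _ hci (rec1 2 0) S02 S12 S22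

lemma AB (a : ℤ) : ∀ b : ℤ, Zf a b 0 ∈ V :=
  keyrec V (fun n => Zf a n 0) _ _ _ _ hci (rec2 a 0) (A0 a) (A1 a) (A2 a)

lemma Mem (d1 d2 d3 : ℤ) : Zf d1 d2 d3 ∈ V := by
  have h := shift d3 (d1 - d3) (d2 - d3) 0
  rw [show d1 - d3 + d3 = d1 by ring, show d2 - d3 + d3 = d2 by ring,
    show (0 : ℤ) + d3 = d3 by ring] at h
  rw [h]
  exact Submodule.smul_mem _ _ (AB _ _)

/-- the omega product -/
def Om (σ : Equiv.Perm (Fin 3)) : Fk 3 :=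
  ∏ p ∈ Finset.univ.filter (fun p : Fin 3 × Fin 3 => p.1 < p.2),
    omegaF (q1F 3) (q2F 3) (zF 3 (σ p.1)) (zF 3 (σ p.2))

lemma Shval (a b c : ℤ) :
    Sh (q1F 3) (q2F 3) (zF 3) ![a, b, c] = ∑ σ : Equiv.Perm (Fin 3), Zf a b c σ * Om σ := by
  rw [Sh]
  refine Finset.sum_congr rfl fun σ _ => ?_
  congr 1
  simp [Fin.prod_univ_three, Zf]

end AR3aux

/-- `A^R_3` is generated by the six elements `Sh_3(e1, e2, 0)`, `0 ≤ e1 ≤ 2`, `0 ≤ e2 ≤ 1`, as a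
`V_3`-module: for every `(d1, d2, d3) ∈ ℤ³` there are Laurent polynomials `c_{e1,e2}`, each
symmetric under all permutations of `z1, z2, z3`, with
`Sh_3(d1, d2, d3) = Σ_{e1, e2} c_{e1,e2} · Sh_3(e1, e2, 0)`. -/
theorem AR3_generated_by_six (d1 d2 d3 : ℤ) :
    ∃ c : Fin 3 → Fin 2 → Fk 3,
      (∀ (e1 : Fin 3) (e2 : Fin 2),
        c e1 e2 ∈ laurentSubring (q1F 3) (q2F 3) (zF 3) ∧
        ∀ τ : Equiv.Perm (Fin 3), permAut 3 τ (c e1 e2) = c e1 e2) ∧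
      Sh (q1F 3) (q2F 3) (zF 3) ![d1, d2, d3] =
        ∑ e1 : Fin 3, ∑ e2 : Fin 2,
          c e1 e2 * Sh (q1F 3) (q2F 3) (zF 3) ![((e1 : ℕ) : ℤ), ((e2 : ℕ) : ℤ), 0] := by
  have hmem := AR3aux.Mem d1 d2 d3
  rw [AR3aux.V, Submodule.mem_span_range_iff_exists_fun] at hmem
  obtain ⟨cc, hcc⟩ := hmem
  refine ⟨fun e1 e2 => (cc (e1, e2) : Fk 3), fun e1 e2 => ?_, ?_⟩
  · exact AR3aux.mem_ΛL.mp (cc (e1, e2)).2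
  · have hfun : ∀ σ, AR3aux.Zf d1 d2 d3 σ = ∑ i : Fin 3 × Fin 2, (cc i : Fk 3) * AR3aux.G i σ := by
      intro σ
      rw [← hcc]
      simp [Finset.sum_apply, AR3aux.smul_apply', AR3aux.smul_eq']
    calc Sh (q1F 3) (q2F 3) (zF 3) ![d1, d2, d3]
        = ∑ σ : Equiv.Perm (Fin 3), AR3aux.Zf d1 d2 d3 σ * AR3aux.Om σ := AR3aux.Shval d1 d2 d3
      _ = ∑ σ : Equiv.Perm (Fin 3), ∑ i : Fin 3 × Fin 2, (cc i : Fk 3) * AR3aux.G i σ * AR3aux.Om σ := by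
          refine Finset.sum_congr rfl fun σ _ => ?_
          rw [hfun σ, Finset.sum_mul]
      _ = ∑ i : Fin 3 × Fin 2, (cc i : Fk 3) * ∑ σ : Equiv.Perm (Fin 3), AR3aux.G i σ * AR3aux.Om σ := by
          rw [Finset.sum_comm]
          refine Finset.sum_congr rfl fun i _ => ?_
          rw [Finset.mul_sum]
          refine Finset.sum_congr rfl fun σ _ => by ring
      _ = ∑ e1 : Fin 3, ∑ e2 : Fin 2,
            (cc (e1, e2) : Fk 3) * Sh (q1F 3) (q2F 3) (zF 3) ![((e1 : ℕ) : ℤ), ((e2 : ℕ) : ℤ), 0] := by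
          rw [Fintype.sum_prod_type]
          refine Finset.sum_congr rfl fun e1 _ => Finset.sum_congr rfl fun e2 _ => ?_
          rw [AR3aux.Shval]
          rfl


end
end

section
/- In the field ℂ(q1, q2, z1, z2) with q = q1·q2, the following identity of monomial shuffle elements holds: 2·Sh_2(1, 0) − (z1 + z2)·Sh_2(0, 0) = z1·z2·(1 − q1)(1 − q2)(1 − q)·(z1 + z2). -/
open MvPolynomial Finset

noncomputable section

/-- In `ℂ(q1, q2, z1, z2)` with `q = q1·q2`:
`2·Sh_2(1, 0) − (z1 + z2)·Sh_2(0, 0) = z1·z2·(1 − q1)(1 − q2)(1 − q)·(z1 + z2)`. -/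
theorem two_sh_one_zero_sub :
    2 * Sh (q1F 2) (q2F 2) (zF 2) ![1, 0]
        - (zF 2 0 + zF 2 1) * Sh (q1F 2) (q2F 2) (zF 2) ![0, 0] =
      zF 2 0 * zF 2 1 *
        ((1 - q1F 2) * (1 - q2F 2) * (1 - q1F 2 * q2F 2)) * (zF 2 0 + zF 2 1) := by
  have hsh : ∀ d : Fin 2 → ℤ, Sh (q1F 2) (q2F 2) (zF 2) d =
      zF 2 0 ^ d 0 * zF 2 1 ^ d 1 * omegaF (q1F 2) (q2F 2) (zF 2 0) (zF 2 1)
      + zF 2 1 ^ d 0 * zF 2 0 ^ d 1 * omegaF (q1F 2) (q2F 2) (zF 2 1) (zF 2 0) := by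
    intro d
    have h1 : (Finset.univ : Finset (Equiv.Perm (Fin 2))) = {1, Equiv.swap 0 1} := by decide
    have h2 : (Finset.univ.filter (fun p : Fin 2 × Fin 2 => p.1 < p.2)) = {(0,1)} := by decide
    rw [Sh, h1, h2]
    rw [Finset.sum_insert (by decide), Finset.sum_singleton]
    simp [Fin.prod_univ_two, Equiv.swap_apply_left, Equiv.swap_apply_right]
  have hne : zF 2 0 ≠ zF 2 1 := by
    have : Function.Injective (algebraMap (MvPolynomial (Fin 2 ⊕ Fin 2) ℂ) (Fk 2)) :=
      IsFractionRing.injective _ _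
    intro h
    exact (by decide : (Sum.inr 0 : Fin 2 ⊕ Fin 2) ≠ Sum.inr 1)
      (MvPolynomial.X_injective (this h))
  have hne' : zF 2 0 - zF 2 1 ≠ 0 := sub_ne_zero.mpr hne
  have hne'' : zF 2 1 - zF 2 0 ≠ 0 := sub_ne_zero.mpr (Ne.symm hne)
  rw [hsh, hsh]
  simp only [Matrix.cons_val_zero, Matrix.cons_val_one, Matrix.head_cons, zpow_one, zpow_zero,
    one_mul, mul_one, omegaF]
  field_simp
  ring

end
end
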